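/- Let G=(V,E) be a directed graph with ranking r. If for every pair u,v the labels satisfy: whenever a trough shortest path from u to v exists with r(v)>r(u) then (v,dist_G(u,v)) ∈ L_out(u), and symmetrically for L_in — then for every pair (s,t) with finite dist_G(s,t), there exists a common pivot w with (w,dist_G(s,w)) ∈ L_out(s), (w,dist_G(w,t)) ∈ L_in(t), and dist_G(s,w)+dist_G(w,t)=dist_G(s,t); specifically w can be taken as the maximum-rank vertex on some shortest path from s to t. -/

import Mathlib

def IsPath {V : Type*} (E : V → V → Prop) (p : List V) (u v : V) : Prop :=
  List.Chain' E p ∧ p.head? = some u ∧ p.getLast? = some v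

def IsShortestPath {V : Type*} (E : V → V → Prop) (p : List V) (u v : V) : Prop :=
  IsPath E p u v ∧ ∀ q : List V, IsPath E q u v → p.length ≤ q.length

def Trough {V : Type*} (r : V → ℕ) (p : List V) (u v : V) : Prop :=
  ∀ x ∈ (p.drop 1).dropLast, r x < max (r u) (r v)

noncomputable def GDist {V : Type*} (E : V → V → Prop) (u v : V) : ℕ∞ :=
  sInf { n : ℕ∞ | ∃ p : List V, IsPath E p u v ∧ n = ((p.length - 1 : ℕ) : ℕ∞) }

section Aux

variable {V : Type*} {E : V → V → Prop}

lemma path_ne_nil {p : List V} {u v : V} (h : IsPath E p u v) : p ≠ [] := by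
  intro hn
  rw [hn] at h
  simp [IsPath] at h

lemma path_length_pos {p : List V} {u v : V} (h : IsPath E p u v) : 1 ≤ p.length :=
  List.length_pos_iff.mpr (path_ne_nil h)

lemma isPath_singleton (E : V → V → Prop) (u : V) : IsPath E [u] u u :=
  ⟨List.isChain_singleton u, rfl, rfl⟩

lemma gdist_self (E : V → V → Prop) (u : V) : GDist E u u = 0 := by
  refine le_antisymm ?_ (zero_le)
  have : (0 : ℕ∞) ∈ { n : ℕ∞ | ∃ p : List V, IsPath E p u u ∧ n = ((p.length - 1 : ℕ) : ℕ∞) } :=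
    ⟨[u], isPath_singleton E u, by simp⟩
  exact sInf_le this

lemma gdist_le {p : List V} {u v : V} (h : IsPath E p u v) :
    GDist E u v ≤ ((p.length - 1 : ℕ) : ℕ∞) :=
  sInf_le ⟨p, h, rfl⟩

lemma exists_shortest {u v : V} (h : GDist E u v ≠ ⊤) :
    ∃ p, IsShortestPath E p u v ∧ GDist E u v = ((p.length - 1 : ℕ) : ℕ∞) := by
  classical
  have hex : ∃ n : ℕ, ∃ p : List V, IsPath E p u v ∧ p.length - 1 = n := by
    by_contra hc
    push_neg at hc
    apply h
    rw [GDist]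
    refine (congrArg sInf (?_ : _ = (∅ : Set ℕ∞))).trans sInf_empty
    rw [Set.eq_empty_iff_forall_notMem]
    rintro n ⟨p, hp, rfl⟩
    exact hc _ p hp rfl
  obtain ⟨p, hp, hplen⟩ := Nat.find_spec hex
  have hshort : ∀ q : List V, IsPath E q u v → p.length ≤ q.length := by
    intro q hq
    have h1 := Nat.find_min' hex ⟨q, hq, rfl⟩
    have h2 := path_length_pos hp
    have h3 := path_length_pos hq
    omega
  refine ⟨p, ⟨hp, hshort⟩, ?_⟩
  refine le_antisymm (gdist_le hp) (le_sInf ?_)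
  rintro m ⟨q, hq, rfl⟩
  exact_mod_cast Nat.sub_le_sub_right (hshort q hq) 1

lemma gdist_eq_of_shortest {p : List V} {u v : V} (h : IsShortestPath E p u v) :
    GDist E u v = ((p.length - 1 : ℕ) : ℕ∞) := by
  refine le_antisymm (gdist_le h.1) (le_sInf ?_)
  rintro m ⟨q, hq, rfl⟩
  exact_mod_cast Nat.sub_le_sub_right (h.2 q hq) 1

lemma isPath_take {p : List V} {u v : V} (h : IsPath E p u v) {i : ℕ} (hi : i < p.length) :
    IsPath E (p.take (i + 1)) u (p[i]'hi) := by
  obtain ⟨hc, hh, _⟩ := h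
  refine ⟨hc.take _, ?_, ?_⟩
  · rw [List.head?_eq_getElem?] at hh ⊢
    rw [List.getElem?_take, if_pos (by omega)]
    exact hh
  · have hlen : (p.take (i + 1)).length = i + 1 := by
      rw [List.length_take]; omega
    rw [List.getLast?_eq_getElem?, hlen]
    simp only [Nat.add_sub_cancel]
    rw [List.getElem?_take, if_pos (by omega)]
    exact List.getElem?_eq_getElem hi

lemma isPath_drop {p : List V} {u v : V} (h : IsPath E p u v) {i : ℕ} (hi : i < p.length) :
    IsPath E (p.drop i) (p[i]'hi) v := by
  obtain ⟨hc, _, hl⟩ := h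
  refine ⟨hc.drop _, ?_, ?_⟩
  · rw [List.head?_eq_getElem?, List.getElem?_drop]
    simp only [Nat.add_zero]
    exact List.getElem?_eq_getElem hi
  · rw [List.getLast?_eq_getElem?] at hl ⊢
    rw [List.length_drop, List.getElem?_drop]
    have : i + (p.length - i - 1) = p.length - 1 := by omega
    rw [this]
    exact hl

lemma isPath_append {p q : List V} {u v w : V} (hp : IsPath E p u v) (hq : IsPath E q v w) :
    IsPath E (p ++ q.tail) u w ∧
      (p ++ q.tail).length - 1 = (p.length - 1) + (q.length - 1) := by
  obtain ⟨hpc, hph, hpl⟩ := hp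
  obtain ⟨hqc, hqh, hql⟩ := hq
  have hplen := path_length_pos ⟨hpc, hph, hpl⟩
  cases q with
  | nil => simp at hqh
  | cons a q' =>
    have ha : a = v := by simpa using hqh
    subst ha
    have hlink := (List.isChain_cons.mp hqc).1
    have hqc' := (List.isChain_cons.mp hqc).2
    cases q' with
    | nil =>
      have hvw : a = w := by simpa using hql
      subst hvw
      constructor
      · simpa using ⟨hpc, hph, hpl⟩
      · simp
    | cons b q'' =>
      constructor
      · refine ⟨?_, ?_, ?_⟩
        · refine List.isChain_append.mpr ⟨hpc, hqc', ?_⟩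
          intro x hx y hy
          rw [hpl] at hx
          simp at hx
          subst hx
          exact hlink y hy
        · cases p with
          | nil => simp at hph
          | cons c p' => simpa using hph
        · show (p ++ b :: q'').getLast? = some w
          rw [List.getLast?_append_cons]
          simpa using hql
      · simp only [List.length_append, List.tail_cons, List.length_cons]
        omega

lemma gdist_triangle (E : V → V → Prop) (u v w : V) :
    GDist E u w ≤ GDist E u v + GDist E v w := by
  rcases eq_or_ne (GDist E u v) ⊤ with h | h
  · simp [h]
  rcases eq_or_ne (GDist E v w) ⊤ with h' | h'
  · simp [h']
  obtain ⟨p, hp, hpl⟩ := exists_shortest h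
  obtain ⟨q, hq, hql⟩ := exists_shortest h'
  obtain ⟨hpath, hlen⟩ := isPath_append hp.1 hq.1
  calc GDist E u w ≤ (((p ++ q.tail).length - 1 : ℕ) : ℕ∞) := gdist_le hpath
    _ = (((p.length - 1) + (q.length - 1) : ℕ) : ℕ∞) := by rw [hlen]
    _ = GDist E u v + GDist E v w := by rw [hpl, hql]; push_cast; ring

end Aux

theorem stmt12 {V : Type*} (E : V → V → Prop) (r : V → ℕ) (hr : Function.Injective r)
    (Lout Lin : V → Set (V × ℕ))
    (htriv : ∀ u : V, (u, 0) ∈ Lout u ∧ (u, 0) ∈ Lin u)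
    (hout : ∀ (u v : V) (p : List V), IsShortestPath E p u v → Trough r p u v →
      r u < r v → (v, p.length - 1) ∈ Lout u)
    (hin : ∀ (u v : V) (p : List V), IsShortestPath E p u v → Trough r p u v →
      r v < r u → (u, p.length - 1) ∈ Lin v)
    (hmax : ∀ s t : V, GDist E s t ≠ ⊤ → ∃ vm : V,
      GDist E s vm + GDist E vm t = GDist E s t ∧
      ∀ w : V, GDist E s w + GDist E w t = GDist E s t → r w ≤ r vm) :
    ∀ s t : V, GDist E s t ≠ ⊤ → ∃ (w : V) (d1 d2 : ℕ),
      (w, d1) ∈ Lout s ∧ (w, d2) ∈ Lin t ∧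
      (d1 : ℕ∞) = GDist E s w ∧ (d2 : ℕ∞) = GDist E w t ∧
      (d1 : ℕ∞) + (d2 : ℕ∞) = GDist E s t ∧
      ∀ x : V, GDist E s x + GDist E x t = GDist E s t → r x ≤ r w := by
  intro s t hst
  obtain ⟨vm, hsum, hmaxr⟩ := hmax s t hst
  have h1 : GDist E s vm ≠ ⊤ := by
    intro h; rw [h, top_add] at hsum; exact hst hsum.symm
  have h2 : GDist E vm t ≠ ⊤ := by
    intro h; rw [h, add_top] at hsum; exact hst hsum.symm
  obtain ⟨p, hp, hpl⟩ := exists_shortest h1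
  obtain ⟨q, hq, hql⟩ := exists_shortest h2
  have hrs : r s ≤ r vm := hmaxr s (by rw [gdist_self, zero_add])
  have hrt : r t ≤ r vm := hmaxr t (by rw [gdist_self, add_zero])
  -- Trough property for p : s → vm
  have hTp : Trough r p s vm := by
    intro x hx
    rw [List.mem_iff_getElem] at hx
    obtain ⟨i, hi, hxi⟩ := hx
    have hlen : ((p.drop 1).dropLast).length = p.length - 1 - 1 := by simp
    rw [hlen] at hi
    have hn1 := path_length_pos hp.1
    have hip : i + 1 < p.length - 1 := by omega
    have hip' : i + 1 < p.length := by omega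
    have hx' : p[i + 1]'hip' = x := by
      rw [← hxi, List.getElem_dropLast, List.getElem_drop]
      congr 1
      omega
    have hA : GDist E s x ≤ ((i + 1 : ℕ) : ℕ∞) := by
      have hpath := isPath_take hp.1 hip'
      rw [hx'] at hpath
      have := gdist_le hpath
      have hl : (p.take (i + 1 + 1)).length - 1 = i + 1 := by
        rw [List.length_take]; omega
      rwa [hl] at this
    have hB : GDist E x vm ≤ ((p.length - 1 - (i + 1) : ℕ) : ℕ∞) := by
      have hpath := isPath_drop hp.1 hip'
      rw [hx'] at hpath
      have := gdist_le hpath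
      have hl : (p.drop (i + 1)).length - 1 = p.length - 1 - (i + 1) := by
        rw [List.length_drop]; omega
      rwa [hl] at this
    have hAnt : GDist E s x ≠ ⊤ := (hA.trans_lt (ENat.coe_lt_top _)).ne
    have hBnt : GDist E x vm ≠ ⊤ := (hB.trans_lt (ENat.coe_lt_top _)).ne
    obtain ⟨da, hda⟩ : ∃ m : ℕ, (m : ℕ∞) = GDist E s x := by
      lift GDist E s x to ℕ using hAnt with da hda
      exact ⟨da, rfl⟩
    obtain ⟨db, hdb⟩ : ∃ m : ℕ, (m : ℕ∞) = GDist E x vm := by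
      lift GDist E x vm to ℕ using hBnt with db hdb
      exact ⟨db, rfl⟩
    rw [← hda] at hA
    rw [← hdb] at hB
    have htri := gdist_triangle E s x vm
    rw [← hda, ← hdb, hpl] at htri
    have hA' : da ≤ i + 1 := by exact_mod_cast hA
    have hB' : db ≤ p.length - 1 - (i + 1) := by exact_mod_cast hB
    have htri' : p.length - 1 ≤ da + db := by exact_mod_cast htri
    have hda' : da = i + 1 := by omega
    have hdb' : db = p.length - 1 - (i + 1) := by omega
    have hxs : x ≠ s := by
      intro h
      rw [h, gdist_self] at hda
      have : da = 0 := by exact_mod_cast hda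
      omega
    have hxvm : x ≠ vm := by
      intro h
      rw [h, gdist_self] at hdb
      have : db = 0 := by exact_mod_cast hdb
      omega
    have hxle : r x ≤ r vm := by
      apply hmaxr x
      refine le_antisymm ?_ (gdist_triangle E s x t)
      have hsxvm : GDist E s x + GDist E x vm = GDist E s vm := by
        rw [← hda, ← hdb, hpl]
        norm_cast
        omega
      have htri2 := gdist_triangle E x vm t
      calc GDist E s x + GDist E x t
          ≤ GDist E s x + (GDist E x vm + GDist E vm t) :=
            add_le_add_right htri2 _
        _ = (GDist E s x + GDist E x vm) + GDist E vm t := (add_assoc _ _ _).symm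
        _ = GDist E s vm + GDist E vm t := by rw [hsxvm]
        _ = GDist E s t := hsum
    have : r x < r vm := lt_of_le_of_ne hxle (fun h => hxvm (hr h))
    exact lt_of_lt_of_le this (le_max_right _ _)
  -- Trough property for q : vm → t
  have hTq : Trough r q vm t := by
    intro x hx
    rw [List.mem_iff_getElem] at hx
    obtain ⟨i, hi, hxi⟩ := hx
    have hlen : ((q.drop 1).dropLast).length = q.length - 1 - 1 := by simp
    rw [hlen] at hi
    have hn1 := path_length_pos hq.1
    have hip : i + 1 < q.length - 1 := by omega
    have hip' : i + 1 < q.length := by omega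
    have hx' : q[i + 1]'hip' = x := by
      rw [← hxi, List.getElem_dropLast, List.getElem_drop]
      congr 1
      omega
    have hA : GDist E vm x ≤ ((i + 1 : ℕ) : ℕ∞) := by
      have hpath := isPath_take hq.1 hip'
      rw [hx'] at hpath
      have := gdist_le hpath
      have hl : (q.take (i + 1 + 1)).length - 1 = i + 1 := by
        rw [List.length_take]; omega
      rwa [hl] at this
    have hB : GDist E x t ≤ ((q.length - 1 - (i + 1) : ℕ) : ℕ∞) := by
      have hpath := isPath_drop hq.1 hip'
      rw [hx'] at hpath
      have := gdist_le hpath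
      have hl : (q.drop (i + 1)).length - 1 = q.length - 1 - (i + 1) := by
        rw [List.length_drop]; omega
      rwa [hl] at this
    have hAnt : GDist E vm x ≠ ⊤ := (hA.trans_lt (ENat.coe_lt_top _)).ne
    have hBnt : GDist E x t ≠ ⊤ := (hB.trans_lt (ENat.coe_lt_top _)).ne
    obtain ⟨da, hda⟩ : ∃ m : ℕ, (m : ℕ∞) = GDist E vm x := by
      lift GDist E vm x to ℕ using hAnt with da hda
      exact ⟨da, rfl⟩
    obtain ⟨db, hdb⟩ : ∃ m : ℕ, (m : ℕ∞) = GDist E x t := by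
      lift GDist E x t to ℕ using hBnt with db hdb
      exact ⟨db, rfl⟩
    rw [← hda] at hA
    rw [← hdb] at hB
    have htri := gdist_triangle E vm x t
    rw [← hda, ← hdb, hql] at htri
    have hA' : da ≤ i + 1 := by exact_mod_cast hA
    have hB' : db ≤ q.length - 1 - (i + 1) := by exact_mod_cast hB
    have htri' : q.length - 1 ≤ da + db := by exact_mod_cast htri
    have hda' : da = i + 1 := by omega
    have hdb' : db = q.length - 1 - (i + 1) := by omega
    have hxvm : x ≠ vm := by
      intro h
      rw [h, gdist_self] at hda
      have : da = 0 := by exact_mod_cast hda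
      omega
    have hxle : r x ≤ r vm := by
      apply hmaxr x
      refine le_antisymm ?_ (gdist_triangle E s x t)
      have hvxt : GDist E vm x + GDist E x t = GDist E vm t := by
        rw [← hda, ← hdb, hql]
        norm_cast
        omega
      calc GDist E s x + GDist E x t
          ≤ (GDist E s vm + GDist E vm x) + GDist E x t :=
            add_le_add_left (gdist_triangle E s vm x) _
        _ = GDist E s vm + (GDist E vm x + GDist E x t) := add_assoc _ _ _
        _ = GDist E s vm + GDist E vm t := by rw [hvxt]
        _ = GDist E s t := hsum
    have : r x < r vm := lt_of_le_of_ne hxle (fun h => hxvm (hr h))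
    exact lt_of_lt_of_le this (le_max_left _ _)
  -- produce d1
  have hd1 : ∃ d1 : ℕ, (vm, d1) ∈ Lout s ∧ (d1 : ℕ∞) = GDist E s vm := by
    by_cases hsv : s = vm
    · subst hsv
      exact ⟨0, (htriv s).1, by rw [gdist_self]; rfl⟩
    · have hlt : r s < r vm := lt_of_le_of_ne hrs (fun h => hsv (hr h))
      exact ⟨p.length - 1, hout s vm p hp hTp hlt, hpl.symm⟩
  have hd2 : ∃ d2 : ℕ, (vm, d2) ∈ Lin t ∧ (d2 : ℕ∞) = GDist E vm t := by
    by_cases htv : t = vm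
    · subst htv
      exact ⟨0, (htriv t).2, by rw [gdist_self]; rfl⟩
    · have hlt : r t < r vm := lt_of_le_of_ne hrt (fun h => htv (hr h))
      exact ⟨q.length - 1, hin vm t q hq hTq hlt, hql.symm⟩
  obtain ⟨d1, hd1L, hd1e⟩ := hd1
  obtain ⟨d2, hd2L, hd2e⟩ := hd2
  exact ⟨vm, d1, d2, hd1L, hd2L, hd1e, hd2e, by rw [hd1e, hd2e, hsum], hmaxr⟩
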